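/- Let Φ be a real number with Φ² = Φ + 1 and let w = (w₁, …, wₙ) be a nonempty word of integers. Then the (1,2) entry (row 1, column 2) of M(Φ, w) equals C·Φ + D, where C = −Σ_{s ≪₁ w} χ(n − |s| − 1) · F_{|s|} · m_s and D = −Σ_{s ≪₁ w} χ(n − |s| − 1) · F_{|s|−1} · m_s, the sums ranging over all subwords s of w with s ≪₁ w. -/

import Mathlib

open Matrix

noncomputable section

/-- The matrix `S = !![0, -1; 1, 0]` over `ℝ`. -/
def S : Matrix (Fin 2) (Fin 2) ℝ := !![0, -1; 1, 0]

/-- The matrix `T(λ) = !![1, λ; 0, 1]` over `ℝ`. -/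
def T (lam : ℝ) : Matrix (Fin 2) (Fin 2) ℝ := !![1, lam; 0, 1]

/-- For a nonempty word `w = (w₁, …, wₙ)` of integers,
`M lam w = T(λ)^{w₁} · S · T(λ)^{w₂} · S · ⋯ · S · T(λ)^{wₙ}`. -/
def M (lam : ℝ) : List ℤ → Matrix (Fin 2) (Fin 2) ℝ
  | [] => 1
  | a :: t => T lam ^ a * (t.map fun b => S * T lam ^ b).prod

/-- The 4-periodic function with `χ(0) = 0, χ(1) = 1, χ(2) = 0, χ(3) = -1`
(the nontrivial Dirichlet character mod 4, extended to all integers). -/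
def chi (m : ℤ) : ℤ := if m % 4 = 1 then 1 else if m % 4 = 3 then -1 else 0

/-- The Fibonacci numbers, extended so that `F₋₁ = 1` (the only negative index used). -/
def fibz (m : ℤ) : ℤ := if m < 0 then 1 else (Nat.fib m.toNat : ℤ)

/-- A subword of `(w₁, …, wₙ)` is encoded by its set `J` of (0-based) positions;
the 1-based indices `j₁ < ⋯ < j_m` are the sorted elements of `J` plus one.
`ll1 J` says `jᵢ ≡ i (mod 2)`, i.e. `s ≪₁ w`, for all `i` (1-based), stated here in 0-based form. -/
def ll1 {n : ℕ} (J : Finset (Fin n)) : Prop :=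
  ∀ i : ℕ, ∀ hi : i < (J.sort (· ≤ ·)).length,
    ((J.sort (· ≤ ·)).get ⟨i, hi⟩).val % 2 = i % 2

instance {n : ℕ} : DecidablePred (ll1 (n := n)) := fun _ =>
  Nat.decidableBallLT _ _

open Finset

def ll3 {n : ℕ} (J : Finset (Fin n)) : Prop :=
  ∀ i : ℕ, ∀ hi : i < (J.sort (· ≤ ·)).length,
    ((J.sort (· ≤ ·)).get ⟨i, hi⟩).val % 2 = (i + 1) % 2

instance {n : ℕ} : DecidablePred (ll3 (n := n)) := fun _ =>
  Nat.decidableBallLT _ _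

theorem List.get_map {α β : Type*} (f : α → β) {l : List α} {n : Fin (List.map f l).length} :
    (List.map f l).get n = f (l.get ⟨n, List.length_map (as := l) f ▸ n.isLt⟩) := by
  simp

lemma sort_map {n : ℕ} (J : Finset (Fin n)) :
    (J.map (Fin.succEmb n)).sort (· ≤ ·) = (J.sort (· ≤ ·)).map Fin.succ := by
  refine (fun hp h1 h2 => List.Perm.eq_of_pairwise' (r := (· ≤ ·)) h1 h2 hp) ?_ ?_ ?_
  · rw [← Multiset.coe_eq_coe]
    rw [Finset.sort_eq, Finset.map_val, ← Multiset.map_coe, Finset.sort_eq]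
    rfl
  · exact Finset.pairwise_sort _ _
  · exact List.Pairwise.map _ (fun a b h => Fin.succ_le_succ_iff.mpr h) (Finset.pairwise_sort _ _)

lemma zero_not_mem_map {n : ℕ} (J : Finset (Fin n)) : (0 : Fin (n+1)) ∉ J.map (Fin.succEmb n) := by
  simp only [Finset.mem_map, not_exists]
  rintro x ⟨-, h⟩
  exact (Fin.succ_ne_zero x) h

lemma sort_insert_zero {n : ℕ} (J : Finset (Fin n)) :
    (insert (0 : Fin (n+1)) (J.map (Fin.succEmb n))).sort (· ≤ ·)
      = 0 :: (J.sort (· ≤ ·)).map Fin.succ := by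
  rw [Finset.sort_insert (· ≤ ·) (fun b _ => Fin.zero_le b) (zero_not_mem_map J), sort_map]

lemma ll1_map {n : ℕ} (J : Finset (Fin n)) : ll1 (J.map (Fin.succEmb n)) ↔ ll3 J := by
  unfold ll1 ll3
  rw [sort_map]
  constructor
  · intro h i hi
    have hi' : i < ((J.sort (· ≤ ·)).map Fin.succ).length := by simpa using hi
    have := h i hi'
    simp only [List.get_map, Fin.val_succ] at this
    omega
  · intro h i hi
    have hi' : i < (J.sort (· ≤ ·)).length := by simpa using hi
    have := h i hi'
    simp only [List.get_map, Fin.val_succ]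
    omega

lemma ll3_map {n : ℕ} (J : Finset (Fin n)) : ll3 (J.map (Fin.succEmb n)) ↔ ll1 J := by
  unfold ll1 ll3
  rw [sort_map]
  constructor
  · intro h i hi
    have hi' : i < ((J.sort (· ≤ ·)).map Fin.succ).length := by simpa using hi
    have := h i hi'
    simp only [List.get_map, Fin.val_succ] at this
    omega
  · intro h i hi
    have hi' : i < (J.sort (· ≤ ·)).length := by simpa using hi
    have := h i hi'
    simp only [List.get_map, Fin.val_succ]
    omega

lemma ll1_insert {n : ℕ} (J : Finset (Fin n)) :
    ll1 (insert (0 : Fin (n+1)) (J.map (Fin.succEmb n))) ↔ ll1 J := by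
  unfold ll1
  rw [sort_insert_zero]
  constructor
  · intro h i hi
    have hi' : i + 1 < (0 :: (J.sort (· ≤ ·)).map Fin.succ).length := by simpa using Nat.succ_lt_succ hi
    have := h (i+1) hi'
    simp only [List.get_cons_succ, List.get_map, Fin.val_succ] at this
    omega
  · intro h i hi
    match i, hi with
    | 0, _ => simp
    | (i+1), hi =>
      have hi' : i < (J.sort (· ≤ ·)).length := by simpa using Nat.lt_of_succ_lt_succ hi
      have := h i hi'
      simp only [List.get_cons_succ, List.get_map, Fin.val_succ]
      omega

lemma not_ll3_insert {n : ℕ} (J : Finset (Fin n)) :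
    ¬ ll3 (insert (0 : Fin (n+1)) (J.map (Fin.succEmb n))) := by
  unfold ll3
  rw [sort_insert_zero]
  intro h
  have := h 0 (by simp)
  simp at this

section
variable {n : ℕ}

lemma preimage_map_succ (J : Finset (Fin n)) :
    (J.map (Fin.succEmb n)).preimage Fin.succ (Fin.succ_injective n).injOn = J := by
  ext j
  simp [Fin.succEmb, Fin.succ_injective n.succ, Fin.succ_inj]

lemma map_preimage_succ (K : Finset (Fin (n+1))) (hK : (0 : Fin (n+1)) ∉ K) :
    (K.preimage Fin.succ (Fin.succ_injective n).injOn).map (Fin.succEmb n) = K := by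
  ext x
  simp only [Finset.mem_map, Finset.mem_preimage, Fin.succEmb, Function.Embedding.coeFn_mk]
  constructor
  · rintro ⟨j, hj, rfl⟩; exact hj
  · intro hx
    rcases Fin.eq_succ_of_ne_zero (fun h : x = 0 => hK (h ▸ hx)) with ⟨j, rfl⟩
    exact ⟨j, hx, rfl⟩

lemma erase_insert_zero_map (J : Finset (Fin n)) :
    (insert (0 : Fin (n+1)) (J.map (Fin.succEmb n))).erase 0 = J.map (Fin.succEmb n) := by
  rw [Finset.erase_insert_eq_erase, Finset.erase_eq_of_notMem]
  simp only [Finset.mem_map, Fin.succEmb, Function.Embedding.coeFn_mk, not_exists]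
  rintro x ⟨-, h⟩
  exact Fin.succ_ne_zero x h

lemma sum_finset_fin_split (f : Finset (Fin (n+1)) → ℤ) :
    ∑ K : Finset (Fin (n+1)), f K =
      (∑ J : Finset (Fin n), f (J.map (Fin.succEmb n))) +
      ∑ J : Finset (Fin n), f (insert 0 (J.map (Fin.succEmb n))) := by
  classical
  rw [← Finset.sum_filter_add_sum_filter_not Finset.univ (fun K => (0 : Fin (n+1)) ∉ K) f]
  congr 1
  · refine (Finset.sum_nbij' (fun J => J.map (Fin.succEmb n))
      (fun K => K.preimage Fin.succ (Fin.succ_injective n).injOn)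
      ?_ ?_ ?_ ?_ ?_).symm
    · intro J _
      simp only [Finset.mem_filter, Finset.mem_univ, true_and]
      simp only [Finset.mem_map, Fin.succEmb, Function.Embedding.coeFn_mk, not_exists]
      rintro x ⟨-, h⟩
      exact Fin.succ_ne_zero x h
    · intro K _; exact Finset.mem_univ _
    · intro J _; exact preimage_map_succ J
    · intro K hK
      simp only [Finset.mem_filter, Finset.mem_univ, true_and] at hK
      exact map_preimage_succ K hK
    · intro J _; rfl
  · refine (Finset.sum_nbij' (fun J => insert 0 (J.map (Fin.succEmb n)))
      (fun K => (K.erase 0).preimage Fin.succ (Fin.succ_injective n).injOn)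
      ?_ ?_ ?_ ?_ ?_).symm
    · intro J _
      simp only [Finset.mem_filter, Finset.mem_univ, true_and, not_not]
      exact Finset.mem_insert_self _ _
    · intro K _; exact Finset.mem_univ _
    · intro J _
      show ((insert (0 : Fin (n+1)) (J.map (Fin.succEmb n))).erase 0).preimage Fin.succ _ = J
      rw [erase_insert_zero_map, preimage_map_succ]
    · intro K hK
      simp only [Finset.mem_filter, Finset.mem_univ, true_and, not_not] at hK
      show insert (0 : Fin (n+1)) (((K.erase 0).preimage Fin.succ _).map (Fin.succEmb n)) = K
      rw [map_preimage_succ _ (Finset.notMem_erase _ _), Finset.insert_erase hK]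
    · intro J _; rfl
end

def S1 (n : ℕ) (w : Fin n → ℤ) (g : ℕ → ℤ) : ℤ :=
  ∑ J ∈ Finset.univ.filter (fun J : Finset (Fin n) => ll1 J), g J.card * ∏ j ∈ J, w j

def S3 (n : ℕ) (w : Fin n → ℤ) (g : ℕ → ℤ) : ℤ :=
  ∑ J ∈ Finset.univ.filter (fun J : Finset (Fin n) => ll3 J), g J.card * ∏ j ∈ J, w j

lemma S1_succ (n : ℕ) (w : Fin (n+1) → ℤ) (g : ℕ → ℤ) :
    S1 (n+1) w g = w 0 * S1 n (w ∘ Fin.succ) (fun m => g (m+1)) + S3 n (w ∘ Fin.succ) g := by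
  classical
  unfold S1 S3
  rw [Finset.sum_filter, sum_finset_fin_split]
  rw [Finset.mul_sum, ← Finset.sum_add_distrib]
  rw [Finset.sum_filter, Finset.sum_filter, ← Finset.sum_add_distrib]
  apply Finset.sum_congr rfl
  intro J _
  have hprod : ∏ j ∈ J.map (Fin.succEmb n), w j = ∏ j ∈ J, w (Fin.succ j) := by
    rw [Finset.prod_map]; rfl
  have h0 : (0 : Fin (n+1)) ∉ J.map (Fin.succEmb n) := by
    simp only [Finset.mem_map, Fin.succEmb, Function.Embedding.coeFn_mk, not_exists]
    rintro x ⟨-, h⟩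
    exact Fin.succ_ne_zero x h
  simp only [ll1_map, ll1_insert, Finset.prod_insert h0, Finset.card_insert_of_notMem h0,
    Finset.card_map, hprod]
  rcases Classical.em (ll1 J) with h1 | h1 <;> rcases Classical.em (ll3 J) with h3 | h3 <;>
    simp [h1, h3, Function.comp] <;> ring

lemma S3_succ (n : ℕ) (w : Fin (n+1) → ℤ) (g : ℕ → ℤ) :
    S3 (n+1) w g = S1 n (w ∘ Fin.succ) g := by
  classical
  unfold S1 S3
  rw [Finset.sum_filter, sum_finset_fin_split, Finset.sum_filter]
  have h2 : ∀ J : Finset (Fin n),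
      (if ll3 (insert (0:Fin (n+1)) (J.map (Fin.succEmb n))) then
        g (insert (0:Fin (n+1)) (J.map (Fin.succEmb n))).card *
          ∏ j ∈ insert (0:Fin (n+1)) (J.map (Fin.succEmb n)), w j else 0) = 0 := by
    intro J
    rw [if_neg (not_ll3_insert J)]
  rw [Finset.sum_congr rfl (fun J _ => h2 J), Finset.sum_const_zero, add_zero]
  apply Finset.sum_congr rfl
  intro J _
  have hprod : ∏ j ∈ J.map (Fin.succEmb n), w j = ∏ j ∈ J, w (Fin.succ j) := by
    rw [Finset.prod_map]; rfl
  simp only [ll3_map, Finset.card_map, hprod]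
  rfl

lemma S1_congr (n : ℕ) (w : Fin n → ℤ) {g g' : ℕ → ℤ} (h : ∀ m, g m = g' m) :
    S1 n w g = S1 n w g' :=
  Finset.sum_congr rfl fun J _ => by rw [h]

lemma S3_congr (n : ℕ) (w : Fin n → ℤ) {g g' : ℕ → ℤ} (h : ∀ m, g m = g' m) :
    S3 n w g = S3 n w g' :=
  Finset.sum_congr rfl fun J _ => by rw [h]

lemma S1_add (n : ℕ) (w : Fin n → ℤ) (g h : ℕ → ℤ) :
    S1 n w (fun m => g m + h m) = S1 n w g + S1 n w h := by
  unfold S1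
  rw [← Finset.sum_add_distrib]
  exact Finset.sum_congr rfl fun J _ => by ring

lemma S1_neg (n : ℕ) (w : Fin n → ℤ) (g : ℕ → ℤ) :
    S1 n w (fun m => -g m) = -S1 n w g := by
  unfold S1
  rw [← Finset.sum_neg_distrib]
  exact Finset.sum_congr rfl fun J _ => by ring

lemma chi_add_two (m : ℤ) : chi (m + 2) = -chi m := by
  unfold chi
  have h4 : m % 4 = 0 ∨ m % 4 = 1 ∨ m % 4 = 2 ∨ m % 4 = 3 := by omega
  have : (m + 2) % 4 = (m % 4 + 2) % 4 := by omega
  rcases h4 with h | h | h | h <;> rw [this, h] <;> norm_num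

lemma fibz_succ (k : ℕ) : fibz ((k : ℤ) + 1) = fibz k + fibz ((k : ℤ) - 1) := by
  unfold fibz
  cases k with
  | zero => norm_num
  | succ k =>
    have h1 : ¬ ((k : ℤ) + 1 + 1 < 0) := by omega
    have h2 : ¬ ((k : ℤ) + 1 < 0) := by omega
    have h3 : ¬ ((k : ℤ) + 1 - 1 < 0) := by omega
    push_cast
    rw [if_neg h1, if_neg h2, if_neg h3]
    have e1 : ((k : ℤ) + 1 + 1).toNat = k + 2 := by omega
    have e2 : ((k : ℤ) + 1).toNat = k + 1 := by omega
    have e3 : ((k : ℤ) + 1 - 1).toNat = k := by omega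
    rw [e1, e2, e3, Nat.fib_add_two]
    push_cast
    ring

lemma T_mul (x y : ℝ) : !![1, x; 0, 1] * !![1, y; 0, 1] = !![1, x + y; 0, (1:ℝ)] := by
  ext i j
  fin_cases i <;> fin_cases j <;>
    simp [Matrix.mul_apply, Fin.sum_univ_two] <;> ring

lemma T_pow_nat (lam : ℝ) (k : ℕ) : T lam ^ k = !![1, (k : ℝ) * lam; 0, 1] := by
  induction k with
  | zero => rw [pow_zero, Matrix.one_fin_two]; norm_num
  | succ k ih =>
    have h : ((k + 1 : ℕ) : ℝ) * lam = (k : ℝ) * lam + lam := by push_cast; ring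
    rw [pow_succ, ih, T, T_mul, h]

lemma T_inv (x : ℝ) : (!![1, x; 0, 1] : Matrix (Fin 2) (Fin 2) ℝ)⁻¹ = !![1, -x; 0, 1] := by
  apply Matrix.inv_eq_right_inv
  rw [T_mul, Matrix.one_fin_two]
  norm_num

lemma T_zpow (lam : ℝ) (a : ℤ) : T lam ^ a = !![1, (a : ℝ) * lam; 0, 1] := by
  cases a with
  | ofNat k => rw [Int.ofNat_eq_coe, zpow_natCast, T_pow_nat]; norm_num
  | negSucc k =>
    rw [zpow_negSucc, T_pow_nat, T_inv]
    congr 1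
    push_cast
    ring_nf

lemma M_cons (lam : ℝ) (a : ℤ) (t : List ℤ) (ht : t ≠ []) :
    M lam (a :: t) = T lam ^ a * (S * M lam t) := by
  cases t with
  | nil => exact absurd rfl ht
  | cons b t' =>
    show T lam ^ a * ((S * T lam ^ b) * (t'.map fun c => S * T lam ^ c).prod) = _
    rw [show M lam (b :: t') = T lam ^ b * (t'.map fun c => S * T lam ^ c).prod from rfl]
    rw [mul_assoc]

lemma entry01 (lam : ℝ) (a : ℤ) (A : Matrix (Fin 2) (Fin 2) ℝ) :
    (T lam ^ a * (S * A)) 0 1 = (a : ℝ) * lam * (A 0 1) - A 1 1 := by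
  rw [T_zpow]
  simp [Matrix.mul_apply, Fin.sum_univ_two, S, Matrix.vecMul, dotProduct,
    Matrix.vecHead, Matrix.vecTail]
  ring

lemma entry11 (lam : ℝ) (a : ℤ) (A : Matrix (Fin 2) (Fin 2) ℝ) :
    (T lam ^ a * (S * A)) 1 1 = A 0 1 := by
  rw [T_zpow]
  simp [Matrix.mul_apply, Fin.sum_univ_two, S, Matrix.vecMul, dotProduct,
    Matrix.vecHead, Matrix.vecTail]

lemma S3_neg (n : ℕ) (w : Fin n → ℤ) (g : ℕ → ℤ) :
    S3 n w (fun m => -g m) = -S3 n w g := by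
  unfold S3
  rw [← Finset.sum_neg_distrib]
  exact Finset.sum_congr rfl fun J _ => by ring

def g1 (n m : ℕ) : ℤ := chi ((n:ℤ) - (m:ℤ) - 1) * fibz (m:ℤ)
def h1f (n m : ℕ) : ℤ := chi ((n:ℤ) - (m:ℤ) - 1) * fibz ((m:ℤ) - 1)
def g3 (n m : ℕ) : ℤ := chi ((n:ℤ) - (m:ℤ) - 2) * fibz (m:ℤ)
def h3f (n m : ℕ) : ℤ := chi ((n:ℤ) - (m:ℤ) - 2) * fibz ((m:ℤ) - 1)

lemma chi_shift (x : ℤ) : chi (x + 2) = -chi x := chi_add_two x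

lemma g1_shift (n m : ℕ) : g1 (n+2) (m+1) = g1 (n+1) m + h1f (n+1) m := by
  unfold g1 h1f
  have harg : ((n+2:ℕ):ℤ) - ((m+1:ℕ):ℤ) - 1 = ((n+1:ℕ):ℤ) - (m:ℤ) - 1 := by push_cast; ring
  have hf : fibz ((m+1:ℕ):ℤ) = fibz (m:ℤ) + fibz ((m:ℤ) - 1) := by
    have := fibz_succ m
    push_cast
    convert this using 2
  rw [harg, hf]
  ring

lemma g1_neg_g3 (n m : ℕ) : g1 (n+2) m = -g3 (n+1) m := by
  unfold g1 g3
  have harg : ((n+2:ℕ):ℤ) - (m:ℤ) - 1 = (((n+1:ℕ):ℤ) - (m:ℤ) - 2) + 2 := by push_cast; ring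
  rw [harg, chi_add_two]
  ring

lemma h1f_shift (n m : ℕ) : h1f (n+2) (m+1) = g1 (n+1) m := by
  unfold h1f g1
  have harg : ((n+2:ℕ):ℤ) - ((m+1:ℕ):ℤ) - 1 = ((n+1:ℕ):ℤ) - (m:ℤ) - 1 := by push_cast; ring
  have hf : ((m+1:ℕ):ℤ) - 1 = (m:ℤ) := by push_cast; ring
  rw [harg, hf]

lemma h1f_neg_h3f (n m : ℕ) : h1f (n+2) m = -h3f (n+1) m := by
  unfold h1f h3f
  have harg : ((n+2:ℕ):ℤ) - (m:ℤ) - 1 = (((n+1:ℕ):ℤ) - (m:ℤ) - 2) + 2 := by push_cast; ring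
  rw [harg, chi_add_two]
  ring

lemma g3_eq_g1 (n m : ℕ) : g3 (n+2) m = g1 (n+1) m := by
  unfold g3 g1
  have harg : ((n+2:ℕ):ℤ) - (m:ℤ) - 2 = ((n+1:ℕ):ℤ) - (m:ℤ) - 1 := by push_cast; ring
  rw [harg]

lemma h3f_eq_h1f (n m : ℕ) : h3f (n+2) m = h1f (n+1) m := by
  unfold h3f h1f
  have harg : ((n+2:ℕ):ℤ) - (m:ℤ) - 2 = ((n+1:ℕ):ℤ) - (m:ℤ) - 1 := by push_cast; ring
  rw [harg]

lemma ll1_empty (n : ℕ) : ll1 (∅ : Finset (Fin n)) := by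
  intro i hi
  simp [Finset.sort_empty] at hi

lemma ll3_empty (n : ℕ) : ll3 (∅ : Finset (Fin n)) := by
  intro i hi
  simp [Finset.sort_empty] at hi

lemma S1_zero (w : Fin 0 → ℤ) (g : ℕ → ℤ) : S1 0 w g = g 0 := by
  unfold S1
  have h : (Finset.univ.filter (fun J : Finset (Fin 0) => ll1 J)) = {∅} := by
    ext J
    simp [Finset.eq_empty_of_isEmpty J, ll1_empty, Finset.eq_empty_of_isEmpty (default : Finset (Fin 0))]
  rw [h, Finset.sum_singleton]
  simp

lemma S3_zero (w : Fin 0 → ℤ) (g : ℕ → ℤ) : S3 0 w g = g 0 := by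
  unfold S3
  have h : (Finset.univ.filter (fun J : Finset (Fin 0) => ll3 J)) = {∅} := by
    ext J
    simp [Finset.eq_empty_of_isEmpty J, ll3_empty, Finset.eq_empty_of_isEmpty (default : Finset (Fin 0))]
  rw [h, Finset.sum_singleton]
  simp

lemma chi_zero' : chi 0 = 0 := by decide
lemma chi_neg_one : chi (-1) = -1 := by decide
lemma fibz_zero : fibz 0 = 0 := by decide
lemma fibz_one : fibz 1 = 1 := by decide
lemma fibz_neg_one : fibz (-1) = 1 := by decide

lemma key (Φ : ℝ) (hΦ : Φ ^ 2 = Φ + 1) :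
    ∀ n : ℕ, ∀ w : Fin (n+1) → ℤ,
      M Φ (List.ofFn w) 0 1
          = -(S1 (n+1) w (g1 (n+1)) : ℝ) * Φ - (S1 (n+1) w (h1f (n+1)) : ℝ) ∧
      M Φ (List.ofFn w) 1 1
          = -(S3 (n+1) w (g3 (n+1)) : ℝ) * Φ - (S3 (n+1) w (h3f (n+1)) : ℝ) := by
  intro n
  induction n with
  | zero =>
    intro w
    have hM : M Φ (List.ofFn w) = T Φ ^ (w 0) := by
      show T Φ ^ (w 0) * (List.map _ []).prod = _
      simp
    have hS1g : S1 (0+1) w (g1 (0+1)) = -(w 0) := by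
      rw [S1_succ, S1_zero, S3_zero]
      show w 0 * g1 1 1 + g1 1 0 = -(w 0)
      unfold g1
      norm_num [chi_neg_one, chi_zero', fibz_zero, fibz_one]
    have hS1h : S1 (0+1) w (h1f (0+1)) = 0 := by
      rw [S1_succ, S1_zero, S3_zero]
      show w 0 * h1f 1 1 + h1f 1 0 = 0
      unfold h1f
      norm_num [chi_neg_one, chi_zero', fibz_zero, fibz_neg_one]
    have hS3g : S3 (0+1) w (g3 (0+1)) = 0 := by
      rw [S3_succ, S1_zero]
      show g3 1 0 = 0
      unfold g3
      norm_num [chi_neg_one, fibz_zero]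
    have hS3h : S3 (0+1) w (h3f (0+1)) = -1 := by
      rw [S3_succ, S1_zero]
      show h3f 1 0 = -1
      unfold h3f
      norm_num [chi_neg_one, fibz_neg_one]
    rw [hM, T_zpow, hS1g, hS1h, hS3g, hS3h]
    constructor
    · push_cast
      simp
      try ring
    · push_cast
      simp
      try ring
  | succ n ih =>
    intro w
    set w' : Fin (n+1) → ℤ := w ∘ Fin.succ with hw'
    obtain ⟨ih1, ih2⟩ := ih w'
    have htail : List.ofFn w' ≠ [] := by
      intro h
      have := congrArg List.length h
      simp at this
    have hofn : List.ofFn w = w 0 :: List.ofFn w' := List.ofFn_succ (f := w)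
    have hM : M Φ (List.ofFn w) = T Φ ^ (w 0) * (S * M Φ (List.ofFn w')) := by
      rw [hofn, M_cons _ _ _ htail]
    -- sum identities
    have hA : S1 (n+1+1) w (g1 (n+1+1))
        = w 0 * (S1 (n+1) w' (g1 (n+1)) + S1 (n+1) w' (h1f (n+1)))
          - S3 (n+1) w' (g3 (n+1)) := by
      rw [S1_succ]
      rw [S1_congr (n+1) w' (fun m => g1_shift n m), S1_add]
      rw [S3_congr (n+1) w' (fun m => g1_neg_g3 n m), S3_neg]
      ring
    have hB : S1 (n+1+1) w (h1f (n+1+1))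
        = w 0 * S1 (n+1) w' (g1 (n+1)) - S3 (n+1) w' (h3f (n+1)) := by
      rw [S1_succ]
      rw [S1_congr (n+1) w' (fun m => h1f_shift n m)]
      rw [S3_congr (n+1) w' (fun m => h1f_neg_h3f n m), S3_neg]
      ring
    have hC : S3 (n+1+1) w (g3 (n+1+1)) = S1 (n+1) w' (g1 (n+1)) := by
      rw [S3_succ, S1_congr (n+1) w' (fun m => g3_eq_g1 n m)]
    have hD : S3 (n+1+1) w (h3f (n+1+1)) = S1 (n+1) w' (h1f (n+1)) := by
      rw [S3_succ, S1_congr (n+1) w' (fun m => h3f_eq_h1f n m)]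
    constructor
    · rw [hM, entry01, ih1, ih2, hA, hB]
      push_cast
      linear_combination (-(w 0 : ℝ) * (S1 (n+1) w' (g1 (n+1)) : ℝ)) * hΦ
    · rw [hM, entry11, ih1, hC, hD]

theorem stmt7 (Φ : ℝ) (hΦ : Φ ^ 2 = Φ + 1) (n : ℕ) (hn : 0 < n) (w : Fin n → ℤ) :
    M Φ (List.ofFn w) 0 1 =
      -((∑ J ∈ Finset.univ.filter (fun J : Finset (Fin n) => ll1 J),
          chi ((n : ℤ) - J.card - 1) * fibz (J.card : ℤ) * ∏ j ∈ J, w j : ℤ) : ℝ) * Φ +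
      -((∑ J ∈ Finset.univ.filter (fun J : Finset (Fin n) => ll1 J),
          chi ((n : ℤ) - J.card - 1) * fibz ((J.card : ℤ) - 1) * ∏ j ∈ J, w j : ℤ) : ℝ) := by
  obtain ⟨k, rfl⟩ := Nat.exists_eq_succ_of_ne_zero hn.ne'
  obtain ⟨h1, -⟩ := key Φ hΦ k w
  rw [h1, sub_eq_add_neg]
  rfl
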